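/- For partitions λ and μ each with at most n parts, the product of Schur polynomials satisfies s_λ · s_μ = det(h_{λ_i + μ_{n+1-j} - i + j})_{i,j=1}^n, where h_k denotes the k-th complete homogeneous symmetric polynomial, with the conventions h_0 = 1 and h_k = 0 for k < 0. -/

import Mathlib

open MvPolynomial

/-- Complete homogeneous symmetric polynomial in `n` variables, indexed by an
integer, with the convention `h_k = 0` for `k < 0` and `h_0 = 1`. -/
noncomputable def hInt (n : ℕ) (k : ℤ) : MvPolynomial (Fin n) ℤ :=
  if 0 ≤ k then hsymm (Fin n) ℤ k.toNat else 0

/-- The Schur polynomial of `α` in `n` variables, defined via the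
Jacobi–Trudi determinant `s_α = det (h_{α_i - i + j})_{i,j}`. -/
noncomputable def schur (n : ℕ) (α : Fin n → ℕ) : MvPolynomial (Fin n) ℤ :=
  Matrix.det (Matrix.of fun i j : Fin n => hInt n ((α i : ℤ) - (i : ℕ) + (j : ℕ)))

/-- A symmetric polynomial is Schur positive if it is a nonnegative integer
combination of Schur polynomials of partitions. -/
def SchurPositive (n : ℕ) (f : MvPolynomial (Fin n) ℤ) : Prop :=
  ∃ c : (Fin n → ℕ) →₀ ℕ, (∀ lam ∈ c.support, Antitone lam) ∧
    f = c.sum fun lam k => (k : ℤ) • schur n lam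

section Aux
open Finset

variable (n : ℕ)

lemma hInt_neg {k : ℤ} (h : k < 0) : hInt n k = 0 := if_neg (not_le.mpr h)

lemma hInt_ofNat (m : ℕ) : hInt n m = hsymm (Fin n) ℤ m := by
  rw [hInt, if_pos (by positivity), Int.toNat_natCast]

lemma esymm_zero_of_gt {r : ℕ} (h : n < r) : esymm (Fin n) ℤ r = 0 := by
  rw [esymm, Finset.powersetCard_eq_empty.mpr (by simpa using h), Finset.sum_empty]

theorem hsymm_eq_sum (d : ℕ) :
    hsymm (Fin n) ℤ d = ∑ l ∈ finsuppAntidiag (univ : Finset (Fin n)) d, ∏ i, X i ^ l i := by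
  rw [hsymm]
  refine Finset.sum_bij' (fun (s : Sym (Fin n) d) _ => Multiset.toFinsupp (s : Multiset (Fin n)))
    (fun l hl => ⟨Finsupp.toMultiset l, ?_⟩) (fun s _ => ?_) (fun l hl => mem_univ _)
    (fun s _ => ?_) (fun l hl => ?_) (fun s _ => ?_)
  · -- card of toMultiset = d
    rw [mem_finsuppAntidiag] at hl
    rw [Finsupp.card_toMultiset]
    rw [Finsupp.sum_fintype _ _ (fun _ => rfl)]
    exact hl.1
  · -- i maps into t
    rw [mem_finsuppAntidiag]
    refine ⟨?_, subset_univ _⟩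
    refine Eq.trans ?_ ((Multiset.sum_count_eq_card
        (fun a (_ : a ∈ (s : Multiset (Fin n))) => mem_univ a)).trans s.2)
    exact Finset.sum_congr rfl fun a _ => by rw [Multiset.toFinsupp_apply]
  · -- left inverse
    ext : 1
    simp
  · -- right inverse
    simp
  · -- terms agree
    rw [Finset.prod_congr rfl (fun i _ => by rw [Multiset.toFinsupp_apply])]
    rw [Finset.prod_multiset_map_count]
    exact Finset.prod_subset (subset_univ _) (by
      intro x _ hx
      simp only [Multiset.mem_toFinset] at hx
      rw [Multiset.count_eq_zero_of_notMem hx, pow_zero])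

local notation "T" => (PowerSeries.X : PowerSeries (MvPolynomial (Fin n) ℤ))
local notation "PC" => (PowerSeries.C (R := MvPolynomial (Fin n) ℤ))

lemma coeff_E (a : ℕ) :
    PowerSeries.coeff a (∏ i : Fin n, (1 - PC (X i) * T)) =
      (-1) ^ a * esymm (Fin n) ℤ a := by
  have h1 : ∀ i : Fin n, (1 - PC (X i) * T) = (-(PC (X i) * T)) + 1 := fun i => by ring
  simp_rw [h1]
  rw [Finset.prod_add, map_sum]
  have key : ∀ t : Finset (Fin n), (PowerSeries.coeff a)
      ((∏ i ∈ t, -(PC (X i) * T)) * (∏ _i ∈ univ \ t, (1 : PowerSeries (MvPolynomial (Fin n) ℤ)))) =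
      if t.card = a then (-1) ^ a * ∏ i ∈ t, X i else 0 := by
    intro t
    rw [Finset.prod_const_one, mul_one]
    have e1 : (∏ i ∈ t, -(PC (X i) * T)) = PC ((-1) ^ t.card * ∏ i ∈ t, X i) * T ^ t.card := by
      calc ∏ i ∈ t, -(PC (X i) * T)
          = ∏ i ∈ t, (PC ((-1) * X i) * T) := Finset.prod_congr rfl fun i _ => by
            rw [map_mul, map_neg, map_one]; ring
        _ = (∏ i ∈ t, PC ((-1) * X i)) * T ^ t.card := by
            rw [Finset.prod_mul_distrib, Finset.prod_const]
        _ = PC ((-1) ^ t.card * ∏ i ∈ t, X i) * T ^ t.card := by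
            rw [← map_prod, Finset.prod_mul_distrib, Finset.prod_const]
    rw [e1, PowerSeries.coeff_C_mul, PowerSeries.coeff_X_pow]
    split
    · rw [if_pos (by omega), mul_one]
      congr 2
      omega
    · rw [if_neg (by omega), mul_zero]
  rw [Finset.sum_congr rfl (fun t _ => key t), ← Finset.sum_filter, esymm, Finset.mul_sum]
  refine (Finset.sum_congr ?_ (fun t _ => rfl))
  ext t
  simp [Finset.mem_powersetCard, Finset.mem_filter, Finset.subset_univ]

lemma geom_inv (i : Fin n) :
    (1 - PC (X i) * T) * PowerSeries.mk (fun m => X i ^ m) = 1 := by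
  ext k
  rw [sub_mul, one_mul, map_sub, mul_assoc]
  cases k with
  | zero => simp
  | succ m =>
    rw [PowerSeries.coeff_mk, PowerSeries.coeff_C_mul, PowerSeries.coeff_succ_X_mul,
      PowerSeries.coeff_mk, PowerSeries.coeff_one, if_neg (Nat.succ_ne_zero m)]
    ring

lemma prod_geom : ∏ i : Fin n, PowerSeries.mk (fun m => (X i : MvPolynomial (Fin n) ℤ) ^ m)
    = PowerSeries.mk (fun m => hsymm (Fin n) ℤ m) := by
  refine PowerSeries.ext fun d => ?_
  rw [PowerSeries.coeff_prod, PowerSeries.coeff_mk, hsymm_eq_sum]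
  exact Finset.sum_congr rfl fun l _ => Finset.prod_congr rfl fun i _ => by
    rw [PowerSeries.coeff_mk]

lemma E_mul_H : (∏ i : Fin n, (1 - PC (X i) * T)) *
    PowerSeries.mk (fun m => hsymm (Fin n) ℤ m) = 1 := by
  rw [← prod_geom, ← Finset.prod_mul_distrib,
    Finset.prod_congr rfl (fun i (_ : i ∈ univ) => geom_inv n i)]
  exact Finset.prod_const_one

/-- The key recurrence: `∑ (-1)^r e_r h_{K-r} = 0` for `K ≥ 1`. -/
theorem rec_h (K : ℤ) (hK : 1 ≤ K) :
    ∑ r ∈ Finset.range (n + 1), (-1) ^ r * esymm (Fin n) ℤ r * hInt n (K - r) = 0 := by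
  set K' := K.toNat with hK'
  have hKK : K = (K' : ℤ) := by omega
  have h0 := congrArg (PowerSeries.coeff K') (E_mul_H n)
  rw [PowerSeries.coeff_mul, PowerSeries.coeff_one, if_neg (by omega),
    Finset.Nat.sum_antidiagonal_eq_sum_range_succ_mk] at h0
  simp_rw [coeff_E, PowerSeries.coeff_mk] at h0
  -- h0 : ∑ a ∈ range (K'+1), (-1)^a * esymm a * hsymm (K' - a) = 0
  have heq : ∀ a ∈ Finset.range (K' + 1),
      (-1) ^ a * esymm (Fin n) ℤ a * hsymm (Fin n) ℤ (K' - a)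
      = (-1) ^ a * esymm (Fin n) ℤ a * hInt n (K - a) := by
    intro a ha
    rw [Finset.mem_range] at ha
    rw [hInt, if_pos (by omega)]
    congr 2
    omega
  rw [Finset.sum_congr rfl heq] at h0
  set N := max (n + 1) (K' + 1) with hN
  have e1 : ∑ r ∈ Finset.range (n + 1), (-1) ^ r * esymm (Fin n) ℤ r * hInt n (K - r)
      = ∑ r ∈ Finset.range N, (-1) ^ r * esymm (Fin n) ℤ r * hInt n (K - r) :=
    Finset.sum_subset (Finset.range_subset_range.mpr (le_max_left _ _)) (fun r _ hr => by
      rw [esymm_zero_of_gt n (by simp at hr ⊢; omega), mul_zero, zero_mul])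
  have e2 : ∑ r ∈ Finset.range (K' + 1), (-1) ^ r * esymm (Fin n) ℤ r * hInt n (K - r)
      = ∑ r ∈ Finset.range N, (-1) ^ r * esymm (Fin n) ℤ r * hInt n (K - r) :=
    Finset.sum_subset (Finset.range_subset_range.mpr (le_max_right _ _)) (fun r _ hr => by
      rw [hInt_neg n (by simp at hr ⊢; omega), mul_zero])
  rw [e1, ← e2, h0]

theorem rec_x (k : Fin n) : ∑ j ∈ Finset.range (n + 1),
    (-1) ^ j * esymm (Fin n) ℤ j * (X k : MvPolynomial (Fin n) ℤ) ^ (n - j) = 0 := by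
  have h := congrArg (Polynomial.eval (-(X k : MvPolynomial (Fin n) ℤ)))
    (MvPolynomial.prod_C_add_X_eq_sum_esymm ℤ (Fin n))
  rw [Polynomial.eval_prod, Polynomial.eval_finset_sum,
    Finset.prod_eq_zero (Finset.mem_univ k)
      (by rw [Polynomial.eval_add, Polynomial.eval_X, Polynomial.eval_C, neg_add_cancel])] at h
  simp_rw [Polynomial.eval_mul, Polynomial.eval_C, Polynomial.eval_pow, Polynomial.eval_X,
    Fintype.card_fin] at h
  calc ∑ j ∈ Finset.range (n + 1),
      (-1) ^ j * esymm (Fin n) ℤ j * (X k : MvPolynomial (Fin n) ℤ) ^ (n - j)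
      = (-1) ^ n * ∑ j ∈ Finset.range (n + 1),
          esymm (Fin n) ℤ j * (-(X k : MvPolynomial (Fin n) ℤ)) ^ (n - j) := by
        rw [Finset.mul_sum]
        refine Finset.sum_congr rfl fun j hj => ?_
        have hjn : j ≤ n := by rw [Finset.mem_range] at hj; omega
        have hsign : ((-1 : MvPolynomial (Fin n) ℤ)) ^ n * (-1) ^ (n - j) = (-1) ^ j := by
          rw [← pow_add, show n + (n - j) = j + 2 * (n - j) by omega, pow_add, pow_mul,
            neg_one_sq, one_pow, mul_one]
        rw [neg_pow]
        linear_combination (-(esymm (Fin n) ℤ j * (X k : MvPolynomial (Fin n) ℤ) ^ (n - j))) * hsign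
    _ = 0 := by rw [← h, mul_zero]

noncomputable def recCoeff (r : ℕ) : MvPolynomial (Fin n) ℤ :=
  (-1) ^ (n - r) * esymm (Fin n) ℤ (n - r)

def IsRec (u : ℕ → MvPolynomial (Fin n) ℤ) : Prop :=
  ∀ m, ∑ r ∈ Finset.range (n + 1), recCoeff n r * u (m + r) = 0

theorem isRec_ext {u v : ℕ → MvPolynomial (Fin n) ℤ} (hu : IsRec n u) (hv : IsRec n v)
    (h : ∀ m, m < n → u m = v m) : ∀ m, u m = v m := by
  intro m
  induction m using Nat.strong_induction_on with
  | _ m ih =>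
    rcases lt_or_ge m n with hm | hm
    · exact h m hm
    · obtain ⟨m', rfl⟩ : ∃ m', m = m' + n := ⟨m - n, by omega⟩
      have hu' := hu m'
      have hv' := hv m'
      rw [Finset.sum_range_succ] at hu' hv'
      have hc : recCoeff n n = 1 := by
        simp [recCoeff, esymm_zero]
      have hs : ∑ r ∈ Finset.range n, recCoeff n r * u (m' + r)
          = ∑ r ∈ Finset.range n, recCoeff n r * v (m' + r) :=
        Finset.sum_congr rfl fun r hr => by
          rw [ih (m' + r) (by rw [Finset.mem_range] at hr; omega)]
      rw [hc, one_mul] at hu' hv'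
      linear_combination hu' - hv' - hs

theorem isRec_hseq (c : ℤ) (hc : 1 - (n : ℤ) ≤ c) :
    IsRec n (fun m => hInt n ((m : ℤ) + c)) := by
  intro m
  have h0 := rec_h n ((m : ℤ) + n + c) (by omega)
  have h1 := Finset.sum_range_reflect
    (fun j => (-1) ^ j * esymm (Fin n) ℤ j * hInt n ((m : ℤ) + n + c - j)) (n + 1)
  rw [h0] at h1
  rw [← h1]
  refine Finset.sum_congr rfl fun r hr => ?_
  rw [Finset.mem_range] at hr
  have hrn : r ≤ n := by omega
  rw [recCoeff]
  have e1 : n + 1 - 1 - r = n - r := by omega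
  have e2 : (m : ℤ) + ↑n + c - ↑(n - r) = ↑m + ↑r + c := by omega
  rw [e1, e2]
  show _ * hInt n ((((m + r : ℕ) : ℤ)) + c) = _
  norm_num [Nat.cast_add]

theorem isRec_xpow (k : Fin n) : IsRec n (fun m => (X k : MvPolynomial (Fin n) ℤ) ^ m) := by
  intro m
  have h0 := rec_x n k
  have h1 := Finset.sum_range_reflect
    (fun j => (-1) ^ j * esymm (Fin n) ℤ j * (X k : MvPolynomial (Fin n) ℤ) ^ (n - j)) (n + 1)
  rw [h0] at h1
  have h2 : ∑ r ∈ Finset.range (n + 1),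
      recCoeff n r * (X k : MvPolynomial (Fin n) ℤ) ^ r = 0 := by
    rw [← h1]
    refine Finset.sum_congr rfl fun r hr => ?_
    rw [Finset.mem_range] at hr
    rw [recCoeff, show n + 1 - 1 - r = n - r from by omega,
      show n - (n - r) = r from by omega]
  calc ∑ r ∈ Finset.range (n + 1), recCoeff n r * (X k : MvPolynomial (Fin n) ℤ) ^ (m + r)
      = (∑ r ∈ Finset.range (n + 1), recCoeff n r * (X k : MvPolynomial (Fin n) ℤ) ^ r)
        * (X k : MvPolynomial (Fin n) ℤ) ^ m := by
        rw [Finset.sum_mul]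
        exact Finset.sum_congr rfl fun r _ => by rw [pow_add]; ring
    _ = 0 := by rw [h2, zero_mul]

theorem isRec_comb (w : Fin n → MvPolynomial (Fin n) ℤ) :
    IsRec n (fun m => ∑ k, w k * (X k : MvPolynomial (Fin n) ℤ) ^ m) := by
  intro m
  simp only
  calc ∑ r ∈ Finset.range (n + 1), recCoeff n r * ∑ k, w k * (X k : MvPolynomial (Fin n) ℤ) ^ (m + r)
      = ∑ r ∈ Finset.range (n + 1), ∑ k, recCoeff n r * (w k * (X k : MvPolynomial (Fin n) ℤ) ^ (m + r)) := by
        exact Finset.sum_congr rfl fun r _ => Finset.mul_sum _ _ _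
    _ = ∑ k, ∑ r ∈ Finset.range (n + 1), recCoeff n r * (w k * (X k : MvPolynomial (Fin n) ℤ) ^ (m + r)) :=
        Finset.sum_comm
    _ = ∑ k, w k * ∑ r ∈ Finset.range (n + 1), recCoeff n r * (X k : MvPolynomial (Fin n) ℤ) ^ (m + r) := by
        refine Finset.sum_congr rfl fun k _ => ?_
        rw [Finset.mul_sum]
        exact Finset.sum_congr rfl fun r _ => by ring
    _ = 0 := by
        rw [Finset.sum_congr rfl fun k (_ : k ∈ univ) => by rw [isRec_xpow n k m, mul_zero]]
        exact Finset.sum_const_zero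

theorem isRec_smul (d : MvPolynomial (Fin n) ℤ) {u : ℕ → MvPolynomial (Fin n) ℤ}
    (hu : IsRec n u) : IsRec n (fun m => d * u m) := by
  intro m
  have := hu m
  calc ∑ r ∈ Finset.range (n + 1), recCoeff n r * (d * u (m + r))
      = d * ∑ r ∈ Finset.range (n + 1), recCoeff n r * u (m + r) := by
        rw [Finset.mul_sum]; exact Finset.sum_congr rfl fun r _ => by ring
    _ = 0 := by rw [this, mul_zero]

noncomputable def Xmat (a : Fin n → ℕ) : Matrix (Fin n) (Fin n) (MvPolynomial (Fin n) ℤ) :=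
  Matrix.of fun i k => (X k : MvPolynomial (Fin n) ℤ) ^ (a i)

noncomputable def Hmat (a : Fin n → ℕ) (c : Fin n → ℤ) :
    Matrix (Fin n) (Fin n) (MvPolynomial (Fin n) ℤ) :=
  Matrix.of fun i j => hInt n ((a i : ℤ) + c j)

def drev : Fin n → ℕ := fun i => n - 1 - (i : ℕ)

theorem Xmat_drev_det_ne_zero : (Xmat n (drev n)).det ≠ 0 := by
  have h1 : Xmat n (drev n) = ((Matrix.vandermonde (X : Fin n → MvPolynomial (Fin n) ℤ)).transpose).submatrix
      (⇑(Fin.revPerm : Equiv.Perm (Fin n))) id := by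
    refine Matrix.ext fun i k => ?_
    simp only [Xmat, Matrix.of_apply, Matrix.submatrix_apply, Matrix.transpose_apply,
      Matrix.vandermonde, Fin.revPerm_apply, id_eq, Matrix.of_apply]
    congr 1
    rw [Fin.val_rev, drev]
    omega
  rw [h1, Matrix.det_permute, Matrix.det_transpose]
  have h2 : (Matrix.vandermonde (X : Fin n → MvPolynomial (Fin n) ℤ)).det ≠ 0 := by
    rw [Matrix.det_vandermonde]
    refine Finset.prod_ne_zero_iff.mpr fun i _ => Finset.prod_ne_zero_iff.mpr fun j hj => ?_
    rw [sub_ne_zero]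
    exact fun hXX => absurd (X_injective hXX) (by rintro rfl; exact absurd (Finset.mem_Ioi.mp hj) (lt_irrefl _))
  refine mul_ne_zero ?_ h2
  rcases Int.units_eq_one_or (Equiv.Perm.sign (Fin.revPerm : Equiv.Perm (Fin n))) with h | h <;>
    rw [h] <;> simp

theorem det_exchange (a : Fin n → ℕ) (c : Fin n → ℤ) (hc : ∀ j, 1 - (n : ℤ) ≤ c j) :
    (Xmat n (drev n)).det * (Hmat n a c).det = (Xmat n a).det * (Hmat n (drev n) c).det := by
  rcases Nat.eq_zero_or_pos n with rfl | hn
  · simp [Matrix.det_fin_zero]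
  · set V := Xmat n (drev n) with hV
    set w := V.adjugate * Hmat n (drev n) c with hw
    have hVw : V * w = V.det • Hmat n (drev n) c := by
      rw [hw, ← Matrix.mul_assoc, Matrix.mul_adjugate, Matrix.smul_mul, Matrix.one_mul]
    have hall : ∀ j : Fin n, ∀ m : ℕ,
        (∑ k, w k j * (X k : MvPolynomial (Fin n) ℤ) ^ m) = V.det * hInt n ((m : ℤ) + c j) := by
      intro j
      refine isRec_ext n (isRec_comb n (fun k => w k j))
        (isRec_smul n V.det (isRec_hseq n (c j) (hc j))) ?_
      intro m hm
      let i : Fin n := ⟨n - 1 - m, by omega⟩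
      have hdrev : drev n i = m := by simp only [drev, i]; omega
      have hmul := congrFun (congrFun hVw i) j
      rw [Matrix.mul_apply] at hmul
      have hL : ∑ k, V i k * w k j = ∑ k, w k j * (X k : MvPolynomial (Fin n) ℤ) ^ m := by
        refine Finset.sum_congr rfl fun k _ => ?_
        rw [show V i k = (X k : MvPolynomial (Fin n) ℤ) ^ (drev n i) from rfl, hdrev]
        ring
      rw [hL] at hmul
      rw [hmul]
      show (V.det • Hmat n (drev n) c) i j = _
      rw [Matrix.smul_apply, smul_eq_mul]
      congr 2
      rw [show Hmat n (drev n) c i j = hInt n ((drev n i : ℤ) + c j) from rfl, hdrev]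
    have hXw : Xmat n a * w = V.det • Hmat n a c := by
      refine Matrix.ext fun i j => ?_
      rw [Matrix.mul_apply, Matrix.smul_apply, smul_eq_mul]
      calc ∑ k, Xmat n a i k * w k j
          = ∑ k, w k j * (X k : MvPolynomial (Fin n) ℤ) ^ (a i) :=
            Finset.sum_congr rfl fun k _ => mul_comm _ _
        _ = V.det * hInt n ((a i : ℤ) + c j) := hall j (a i)
        _ = V.det * Hmat n a c i j := rfl
    have hdet := congrArg Matrix.det hXw
    rw [Matrix.det_mul, Matrix.det_smul, Fintype.card_fin] at hdet
    have hdetw : w.det = V.det ^ (n - 1) * (Hmat n (drev n) c).det := by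
      rw [hw, Matrix.det_mul, Matrix.det_adjugate, Fintype.card_fin]
    rw [hdetw] at hdet
    have hpow : V.det ^ n = V.det ^ (n - 1) * V.det := by
      rw [← pow_succ]
      congr 1
      omega
    rw [hpow] at hdet
    apply mul_left_cancel₀ (pow_ne_zero (n - 1) (Xmat_drev_det_ne_zero n))
    linear_combination -hdet


end Aux

/-- `s_λ · s_μ = det (h_{λ_i + μ_{n+1-j} - i + j})_{i,j=1}^n`. -/
theorem schur_mul_schur_det (n : ℕ) (lam mu : Fin n → ℕ)
    (hlam : Antitone lam) (hmu : Antitone mu) :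
    schur n lam * schur n mu =
    Matrix.det (Matrix.of fun i j : Fin n =>
      hInt n ((lam i : ℤ) + (mu j.rev : ℕ) - (i : ℕ) + (j : ℕ))) := by

  set l : Fin n → ℕ := fun i => lam i + (n - 1 - (i : ℕ)) with hl
  set cH : Fin n → ℤ := fun j => (j : ℤ) - n + 1 with hcH
  set cB : Fin n → ℤ := fun j => (mu (Fin.rev j) : ℤ) + (j : ℤ) - n + 1 with hcB
  have hbH : ∀ j, 1 - (n : ℤ) ≤ cH j := fun j => by simp [hcH]; omega
  have hbB : ∀ j, 1 - (n : ℤ) ≤ cB j := fun j => by simp [hcB]; push_cast; omega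
  -- (3) Hmat l cH is the Jacobi-Trudi matrix of lam
  have h3 : Hmat n l cH = Matrix.of fun i j : Fin n => hInt n ((lam i : ℤ) - (i : ℕ) + (j : ℕ)) := by
    refine Matrix.ext fun i j => ?_
    show hInt n ((l i : ℤ) + cH j) = hInt n ((lam i : ℤ) - (i : ℕ) + (j : ℕ))
    congr 1
    have : (i : ℕ) < n := i.isLt
    simp only [hl, hcH]
    push_cast
    omega
  -- (4) Hmat l cB is the RHS matrix
  have h4 : Hmat n l cB = Matrix.of fun i j : Fin n =>
      hInt n ((lam i : ℤ) + (mu j.rev : ℕ) - (i : ℕ) + (j : ℕ)) := by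
    refine Matrix.ext fun i j => ?_
    show hInt n ((l i : ℤ) + cB j) = _
    congr 1
    have : (i : ℕ) < n := i.isLt
    simp only [hl, hcB]
    push_cast
    omega
  -- (2) det of Hmat drev cH is 1
  have h2 : (Hmat n (drev n) cH).det = 1 := by
    rw [Matrix.det_of_upperTriangular (fun i j (hij : (j : Fin n) < i) => ?_)]
    · refine Finset.prod_eq_one fun i _ => ?_
      show hInt n ((drev n i : ℤ) + cH i) = 1
      have : (i : ℕ) < n := i.isLt
      rw [show ((drev n i : ℤ) + cH i) = 0 from by simp only [drev, hcH]; push_cast; omega]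
      rw [hInt, if_pos le_rfl, Int.toNat_zero, hsymm_zero]
    · show hInt n ((drev n i : ℤ) + cH j) = 0
      have h1 : (i : ℕ) < n := i.isLt
      have h2 : (j : ℕ) < (i : ℕ) := hij
      refine hInt_neg n ?_
      simp only [drev, hcH]
      push_cast
      omega
  -- (5) det of Hmat drev cB is schur mu
  have h5 : (Hmat n (drev n) cB).det = schur n mu := by
    have heq : Hmat n (drev n) cB =
        ((Matrix.of fun i j : Fin n => hInt n ((mu i : ℤ) - (i : ℕ) + (j : ℕ))).transpose).submatrix
          (⇑(Fin.revPerm : Equiv.Perm (Fin n))) (⇑(Fin.revPerm : Equiv.Perm (Fin n))) := by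
      refine Matrix.ext fun i j => ?_
      show hInt n ((drev n i : ℤ) + cB j) = hInt n ((mu (Fin.rev j) : ℤ) - (Fin.rev j : ℕ) + (Fin.rev i : ℕ))
      congr 1
      have h1 : (i : ℕ) < n := i.isLt
      have h2 : (j : ℕ) < n := j.isLt
      simp only [drev, hcB, Fin.val_rev]
      push_cast
      omega
    rw [heq, Matrix.det_submatrix_equiv_self, Matrix.det_transpose, schur]
  have E1 := det_exchange n l cH hbH
  have E2 := det_exchange n l cB hbB
  rw [h3, h2, mul_one] at E1
  rw [h4, h5] at E2
  apply mul_left_cancel₀ (Xmat_drev_det_ne_zero n)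
  have E1' : (Xmat n (drev n)).det * schur n lam = (Xmat n l).det := by
    rw [schur]; exact E1
  calc (Xmat n (drev n)).det * (schur n lam * schur n mu)
      = ((Xmat n (drev n)).det * schur n lam) * schur n mu := by ring
    _ = (Xmat n l).det * schur n mu := by rw [E1']
    _ = (Xmat n (drev n)).det * (Matrix.of fun i j : Fin n =>
          hInt n ((lam i : ℤ) + (mu j.rev : ℕ) - (i : ℕ) + (j : ℕ))).det := E2.symm
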